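/- The function q ↦ β_c(q)/q is strictly decreasing on [2, ∞) (with β_c(2) interpreted as the limit lim_{q→2⁺} β_c(q) = 4), where β_c(q) = 2(q-1)/(q-2) · log(q-1). Consequently, for all real q > r ≥ 2 one has r/q < β_c(r)/β_c(q). -/

import Mathlib

/-- Mean-field Potts critical inverse temperature, extended continuously by `β_c(2) = 4`. -/
noncomputable def betac (q : ℝ) : ℝ :=
  if q = 2 then 4 else 2 * (q - 1) / (q - 2) * Real.log (q - 1)

lemma key_log (x : ℝ) (hx : 1 < x) : (x^2 - 1)/(x^2 + 1) < Real.log x := by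
  set φ : ℝ → ℝ := fun y => Real.log y - (y^2 - 1)/(y^2 + 1) with hφ
  have hcont : ContinuousOn φ (Set.Ici (1:ℝ)) := by
    apply ContinuousOn.sub
    · exact Real.continuousOn_log.mono (by intro y hy; simp at *; nlinarith [hy])
    · apply ContinuousOn.div
      · fun_prop
      · fun_prop
      · intro y _; positivity
  have hderiv : ∀ y ∈ interior (Set.Ici (1:ℝ)), 0 < deriv φ y := by
    rw [interior_Ici]
    intro y hy
    have hy1 : (1:ℝ) < y := hy
    have hy0 : y ≠ 0 := by linarith
    have h1 : HasDerivAt (fun y : ℝ => y^2 - 1) (2*y) y := by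
      simpa using ((hasDerivAt_pow 2 y).sub_const 1)
    have h2 : HasDerivAt (fun y : ℝ => y^2 + 1) (2*y) y := by
      simpa using ((hasDerivAt_pow 2 y).add_const 1)
    have hden : (y^2 + 1) ≠ 0 := by positivity
    have h3 : HasDerivAt φ (y⁻¹ - (2*y*(y^2+1) - (y^2-1)*(2*y))/(y^2+1)^2) y :=
      (Real.hasDerivAt_log hy0).sub (h1.div h2 hden)
    rw [h3.deriv]
    have : (2*y*(y^2+1) - (y^2-1)*(2*y))/(y^2+1)^2 = 4*y/(y^2+1)^2 := by ring_nf
    rw [this, sub_pos, div_lt_iff₀ (by positivity), inv_mul_eq_div, lt_div_iff₀ (by positivity)]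
    nlinarith [sq_nonneg (y^2 - 1), sq_nonneg (y-1)]
  have hmono := strictMonoOn_of_deriv_pos (convex_Ici 1) hcont hderiv
  have h := hmono (Set.self_mem_Ici) (le_of_lt hx) hx
  simp only [hφ, Real.log_one] at h
  linarith [h]

lemma g_strictAnti : StrictAntiOn (fun q : ℝ => 2*(q-1)*Real.log (q-1)/((q-2)*q)) (Set.Ioi (2:ℝ)) := by
  apply StrictAntiOn.mono (s := Set.Ioi (2:ℝ)) ?_ (le_refl _)
  apply strictAntiOn_of_deriv_neg (convex_Ioi 2)
  · apply ContinuousOn.div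
    · apply ContinuousOn.mul
      · fun_prop
      · exact Real.continuousOn_log.comp (by fun_prop)
          (by intro q hq; simp at *; intro h; nlinarith)
    · fun_prop
    · intro q hq
      have : (2:ℝ) < q := hq
      have h1 : q - 2 > 0 := by linarith
      positivity
  · rw [interior_Ioi]
    intro q hq
    have hq2 : (2:ℝ) < q := hq
    have hx1 : (1:ℝ) < q - 1 := by linarith
    have hx0 : q - 1 ≠ 0 := by linarith
    have hq0 : q ≠ 0 := by linarith
    have hq20 : q - 2 ≠ 0 := by linarith
    have hN : HasDerivAt (fun q : ℝ => 2*(q-1)*Real.log (q-1))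
        (2 * Real.log (q-1) + 2*(q-1) * ((q-1)⁻¹ * 1)) q := by
      have hl : HasDerivAt (fun q : ℝ => Real.log (q-1)) ((q-1)⁻¹ * 1) q :=
        by have h := (Real.hasDerivAt_log hx0).comp q ((hasDerivAt_id q).sub_const 1); exact h
      have hc : HasDerivAt (fun q : ℝ => 2*(q-1)) 2 q := by
        simpa using ((hasDerivAt_id q).sub_const 1).const_mul 2
      have h := hc.mul hl; exact h
    have hD : HasDerivAt (fun q : ℝ => (q-2)*q) (1*q + (q-2)*1) q := by
      exact ((hasDerivAt_id q).sub_const 2).mul (hasDerivAt_id q)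
    have hDne : (q-2)*q ≠ 0 := mul_ne_zero hq20 hq0
    have h : HasDerivAt (fun q : ℝ => 2*(q-1)*Real.log (q-1)/((q-2)*q)) _ q := hN.div hD hDne
    rw [h.deriv]
    apply div_neg_of_neg_of_pos
    · have hinv : 2*(q-1) * ((q-1)⁻¹ * 1) = 2 := by field_simp
      rw [hinv]
      have hkey := key_log (q-1) hx1
      have hkey' : (q-1)^2 - 1 < ((q-1)^2 + 1) * Real.log (q-1) := by
        rw [div_lt_iff₀ (by positivity)] at hkey
        linarith [hkey]
      nlinarith [hkey']
    · positivity

lemma betac_eq (q : ℝ) (hq : 2 < q) : betac q / q = 2*(q-1)*Real.log (q-1)/((q-2)*q) := by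
  rw [betac, if_neg (by linarith)]
  field_simp

lemma betac_pos (q : ℝ) (hq : 2 ≤ q) : 0 < betac q := by
  rcases eq_or_lt_of_le hq with h | h
  · rw [betac, if_pos h.symm]; norm_num
  · rw [betac, if_neg (by linarith)]
    have h1 : 0 < Real.log (q-1) := Real.log_pos (by linarith)
    have h2 : 0 < 2*(q-1)/(q-2) := by
      apply div_pos <;> linarith
    positivity

lemma betac_div_lt_two (b : ℝ) (hb : 2 < b) : betac b / b < 2 := by
  rw [betac_eq b hb]
  have hden : (0:ℝ) < (b-2)*b := by nlinarith
  rw [div_lt_iff₀ hden]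
  have hL : Real.log (b-1) < b - 2 := by
    have := Real.log_lt_sub_one_of_pos (x := b-1) (by linarith) (by intro h; linarith [h])
    linarith
  have hL0 : 0 < Real.log (b-1) := Real.log_pos (by linarith)
  nlinarith [hL, hL0]

/-- `q ↦ β_c(q)/q` is strictly decreasing on `[2, ∞)`; consequently
`r/q < β_c(r)/β_c(q)` for all real `q > r ≥ 2`. -/
theorem betac_div_self_strictAnti :
    StrictAntiOn (fun q : ℝ => betac q / q) (Set.Ici (2 : ℝ)) ∧
    ∀ q r : ℝ, 2 ≤ r → r < q → r / q < betac r / betac q := by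
  have hanti : StrictAntiOn (fun q : ℝ => betac q / q) (Set.Ici (2 : ℝ)) := by
    intro a ha b hb hab
    rcases eq_or_lt_of_le (Set.mem_Ici.mp ha) with h2a | h2a
    · have hb2 : 2 < b := lt_of_le_of_lt (le_of_eq h2a) hab
      show betac b / b < betac a / a
      have h2 : betac 2 = 4 := by simp [betac]
      rw [← h2a, h2]
      have h42 : (4:ℝ)/2 = 2 := by norm_num
      rw [h42]
      exact betac_div_lt_two b hb2
    · have hb2 : 2 < b := lt_trans h2a hab
      simp only
      rw [betac_eq a h2a, betac_eq b hb2]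
      exact g_strictAnti h2a hb2 hab
  refine ⟨hanti, fun q r hr hrq => ?_⟩
  have hq2 : 2 ≤ q := le_of_lt (lt_of_le_of_lt hr hrq)
  have h := hanti hr hq2 hrq
  simp only at h
  have hr0 : 0 < r := by linarith
  have hq0 : 0 < q := by linarith
  have hbr := betac_pos r hr
  have hbq := betac_pos q hq2
  rw [div_lt_div_iff₀ hq0 hr0] at h
  rw [div_lt_div_iff₀ hq0 hbq]
  nlinarith [h]
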